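/- Let θ ∈ (0, π/2] and define λ₁ = 1/(2+2cos θ), λ = (3+4cos θ)/(6+6cos θ), cos γ = −1/(3+4cos θ), and the four operators α₁ = (λ₁/2)(I + Z), α_a = (λ/2)(I + cos γ · Z + sin γ (cos δ_a · X + sin δ_a · Y)) for a = 2,3,4 with δ₂, δ₃, δ₄ = 0, 2π/3, 4π/3 and sin γ = sqrt(1 − cos²γ) ≥ 0. Then {α₁, α₂, α₃, α₄} is a POVM (each α_a is positive semidefinite and ∑_a α_a = I), and Tr[α_a ρ] = 1/4 for all a, where ρ = (1/2)(I + cos θ · Z). -/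
import Mathlib


open Matrix
open scoped ComplexOrder

noncomputable def PauliX : Matrix (Fin 2) (Fin 2) ℂ := !![0, 1; 1, 0]
noncomputable def PauliY : Matrix (Fin 2) (Fin 2) ℂ := !![0, -Complex.I; Complex.I, 0]
noncomputable def PauliZ : Matrix (Fin 2) (Fin 2) ℂ := !![1, 0; 0, -1]


lemma psd_gen (x g d : ℝ) (hx : 0 ≤ x) (hg1 : 0 ≤ 1 + g) (hg2 : 0 ≤ 1 - g) :
    (((x : ℝ) : ℂ) • ((1 : Matrix (Fin 2) (Fin 2) ℂ) + (g : ℂ) • PauliZ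
      + ((Real.sqrt (1 - g ^ 2) : ℝ) : ℂ) •
        ((Real.cos d : ℂ) • PauliX + (Real.sin d : ℂ) • PauliY))).PosSemidef := by
  set B : Matrix (Fin 2) (Fin 2) ℂ :=
    !![(Real.sqrt (x * (1 + g)) : ℂ),
       (Real.sqrt (x * (1 - g)) : ℂ) * ((Real.cos d : ℂ) - Complex.I * (Real.sin d : ℂ));
       0, 0] with hB
  have e1 : Real.sqrt (x * (1 + g)) * Real.sqrt (x * (1 + g)) = x * (1 + g) :=
    Real.mul_self_sqrt (by positivity)
  have e2 : Real.sqrt (x * (1 - g)) * Real.sqrt (x * (1 - g)) = x * (1 - g) :=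
    Real.mul_self_sqrt (by positivity)
  have e3 : Real.sqrt (x * (1 + g)) * Real.sqrt (x * (1 - g)) = x * Real.sqrt (1 - g ^ 2) := by
    rw [← Real.sqrt_mul (by positivity)]
    have h : x * (1 + g) * (x * (1 - g)) = x ^ 2 * (1 - g ^ 2) := by ring
    rw [h, Real.sqrt_mul (by positivity), Real.sqrt_sq hx]
  have E1 : ((Real.sqrt (x * (1 + g)) : ℝ) : ℂ) * ((Real.sqrt (x * (1 + g)) : ℝ) : ℂ)
      = (x : ℂ) * (1 + (g : ℂ)) := by exact_mod_cast congrArg Complex.ofReal e1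
  have E2 : ((Real.sqrt (x * (1 - g)) : ℝ) : ℂ) * ((Real.sqrt (x * (1 - g)) : ℝ) : ℂ)
      = (x : ℂ) * (1 - (g : ℂ)) := by exact_mod_cast congrArg Complex.ofReal e2
  have E3 : ((Real.sqrt (x * (1 + g)) : ℝ) : ℂ) * ((Real.sqrt (x * (1 - g)) : ℝ) : ℂ)
      = (x : ℂ) * ((Real.sqrt (1 - g ^ 2) : ℝ) : ℂ) := by exact_mod_cast congrArg Complex.ofReal e3
  have E4 : ((Real.cos d : ℝ) : ℂ) ^ 2 + ((Real.sin d : ℝ) : ℂ) ^ 2 = 1 := by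
    have := Real.sin_sq_add_cos_sq d
    exact_mod_cast congrArg Complex.ofReal (by linarith)
  have key : (((x : ℝ) : ℂ) • ((1 : Matrix (Fin 2) (Fin 2) ℂ) + (g : ℂ) • PauliZ
      + ((Real.sqrt (1 - g ^ 2) : ℝ) : ℂ) •
        ((Real.cos d : ℂ) • PauliX + (Real.sin d : ℂ) • PauliY))) = Bᴴ * B := by
    ext i j
    fin_cases i <;> fin_cases j <;>
      simp [hB, Matrix.mul_apply, Fin.sum_univ_two, PauliX, PauliY, PauliZ, Matrix.one_apply,
        ← Complex.ofReal_cos, ← Complex.ofReal_sin,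
        Complex.conj_ofReal, star_mul', map_sub, _root_.map_mul, Complex.conj_I]
    · linear_combination -E1
    · linear_combination -((Real.cos d : ℂ) - Complex.I * (Real.sin d : ℂ)) * E3
    · linear_combination -((Real.cos d : ℂ) + Complex.I * (Real.sin d : ℂ)) * E3
    · linear_combination -(((Real.cos d : ℂ) ^ 2 + (Real.sin d : ℂ) ^ 2) * E2)
        - ((x : ℂ) * (1 - (g : ℂ))) * E4
        + ((Real.sin d : ℂ) ^ 2 * ((Real.sqrt (x * (1 - g)) : ℝ) : ℂ) ^ 2) * Complex.I_sq
  rw [key]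
  exact Matrix.posSemidef_conjTranspose_mul_self B

set_option maxHeartbeats 1000000

lemma cos23 : Real.cos (2 * Real.pi / 3) = -(1 / 2) := by
  have h : 2 * Real.pi / 3 = Real.pi - Real.pi / 3 := by ring
  rw [h, Real.cos_pi_sub, Real.cos_pi_div_three]
lemma sin23 : Real.sin (2 * Real.pi / 3) = Real.sqrt 3 / 2 := by
  have h : 2 * Real.pi / 3 = Real.pi - Real.pi / 3 := by ring
  rw [h, Real.sin_pi_sub, Real.sin_pi_div_three]
lemma cos43 : Real.cos (4 * Real.pi / 3) = -(1 / 2) := by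
  have h : 4 * Real.pi / 3 = Real.pi + Real.pi / 3 := by ring
  rw [h, Real.cos_add, Real.cos_pi, Real.sin_pi, Real.cos_pi_div_three]; ring
lemma sin43 : Real.sin (4 * Real.pi / 3) = -(Real.sqrt 3 / 2) := by
  have h : 4 * Real.pi / 3 = Real.pi + Real.pi / 3 := by ring
  rw [h, Real.sin_add, Real.cos_pi, Real.sin_pi, Real.sin_pi_div_three]; ring


noncomputable def cgam (θ : ℝ) : ℝ := -(1 / (3 + 4 * Real.cos θ))
noncomputable def sgam (θ : ℝ) : ℝ := Real.sqrt (1 - cgam θ ^ 2)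
noncomputable def lam1 (θ : ℝ) : ℝ := 1 / (2 + 2 * Real.cos θ)
noncomputable def lamA (θ : ℝ) : ℝ := (3 + 4 * Real.cos θ) / (6 + 6 * Real.cos θ)
noncomputable def deltaA : Fin 4 → ℝ := ![0, 0, 2 * Real.pi / 3, 4 * Real.pi / 3]

/-- The adjusted tetrahedral POVM. -/
noncomputable def alphaA (θ : ℝ) : Fin 4 → Matrix (Fin 2) (Fin 2) ℂ := fun a =>
  if a = 0 then ((lam1 θ / 2 : ℝ) : ℂ) • ((1 : Matrix (Fin 2) (Fin 2) ℂ) + PauliZ)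
  else ((lamA θ / 2 : ℝ) : ℂ) •
    ((1 : Matrix (Fin 2) (Fin 2) ℂ) + (cgam θ : ℂ) • PauliZ
      + (sgam θ : ℂ) • ((Real.cos (deltaA a) : ℂ) • PauliX + (Real.sin (deltaA a) : ℂ) • PauliY))

/-- Alice's reduced state of `|ψ_θ⟩`. -/
noncomputable def rhoA (θ : ℝ) : Matrix (Fin 2) (Fin 2) ℂ :=
  (1 / 2 : ℂ) • ((1 : Matrix (Fin 2) (Fin 2) ℂ) + (Real.cos θ : ℂ) • PauliZ)

/-- The adjusted tetrahedral measurement is a POVM, each outcome having probability `1/4`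
on the reduced state of `|ψ_θ⟩`. -/
theorem alphaA_povm_uniform (θ : ℝ) (h1 : 0 < θ) (h2 : θ ≤ Real.pi / 2) :
    (∀ a, (alphaA θ a).PosSemidef) ∧ (∑ a, alphaA θ a) = 1
      ∧ ∀ a, (alphaA θ a * rhoA θ).trace = 1 / 4 := by

  have hc0 : 0 ≤ Real.cos θ := Real.cos_nonneg_of_mem_Icc
    ⟨by nlinarith [Real.pi_pos], h2⟩
  have hc1 : Real.cos θ ≤ 1 := Real.cos_le_one θ
  set c := Real.cos θ with hcdef
  have h34 : (0 : ℝ) < 3 + 4 * c := by linarith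
  have h22 : (0 : ℝ) < 2 + 2 * c := by linarith
  have h66 : (0 : ℝ) < 6 + 6 * c := by linarith
  have hg : cgam θ = -(1 / (3 + 4 * c)) := rfl
  have hfrac : 1 / (3 + 4 * c) ≤ 1 := by rw [div_le_one h34]; linarith
  have hfrac0 : 0 < 1 / (3 + 4 * c) := by positivity
  have hg1 : 0 ≤ 1 + cgam θ := by rw [hg]; linarith
  have hg2 : 0 ≤ 1 - cgam θ := by rw [hg]; linarith
  have hlam : 0 ≤ lamA θ / 2 := by
    unfold lamA; rw [← hcdef]; positivity
  have hlam1 : 0 ≤ lam1 θ / 2 := by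
    unfold lam1; rw [← hcdef]; positivity
  have H34 : ((3 : ℂ) + 4 * (c : ℂ)) ≠ 0 := by
    have := Complex.ofReal_ne_zero.mpr h34.ne'
    push_cast at this; convert this using 2 <;> ring
  have H22 : ((2 : ℂ) + 2 * (c : ℂ)) ≠ 0 := by
    have := Complex.ofReal_ne_zero.mpr h22.ne'
    push_cast at this; convert this using 2 <;> ring
  have H66 : ((6 : ℂ) + 6 * (c : ℂ)) ≠ 0 := by
    have := Complex.ofReal_ne_zero.mpr h66.ne'
    push_cast at this; convert this using 2 <;> ring
  refine ⟨?_, ?_, ?_⟩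
  · intro a
    by_cases ha : a = 0
    · subst ha
      have h0 : alphaA θ 0 = ((lam1 θ / 2 : ℝ) : ℂ) •
          ((1 : Matrix (Fin 2) (Fin 2) ℂ) + ((1 : ℝ) : ℂ) • PauliZ
            + ((Real.sqrt (1 - (1 : ℝ) ^ 2) : ℝ) : ℂ) •
              ((Real.cos 0 : ℂ) • PauliX + (Real.sin 0 : ℂ) • PauliY)) := by
        simp [alphaA]
      rw [h0]
      exact psd_gen (lam1 θ / 2) 1 0 hlam1 (by norm_num) (by norm_num)
    · have h0 := psd_gen (lamA θ / 2) (cgam θ) (deltaA a) hlam hg1 hg2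
      simpa [alphaA, ha, sgam] using h0
  · ext i j
    fin_cases i <;> fin_cases j <;>
      simp [alphaA, Fin.sum_univ_four, deltaA, PauliX, PauliY, PauliZ, Matrix.one_apply,
        lamA, lam1, cgam, cos23, sin23, cos43, sin43, ← hcdef,
        -Complex.ofReal_cos, -Complex.ofReal_sin] <;>
      push_cast <;>
      field_simp <;>
      ring
  · intro a
    fin_cases a <;>
      simp [alphaA, rhoA, Matrix.trace, Matrix.mul_apply, Fin.sum_univ_two, deltaA,
        PauliX, PauliY, PauliZ, Matrix.one_apply, lamA, lam1, cgam, ← hcdef] <;>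
      push_cast <;>
      field_simp <;>
      ring
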